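/- Let Y = {(x,y) ∈ ℝ² : (x/a)² + y² = 1} be an ellipse with a > 1, and let h : Y → Y be the map sending each point p ∈ Y to the unique point of intersection of the line normal to Y at p with Y ∖ {p}. Then h is bijective if and only if 1 < a ≤ √2. -/

import Mathlib

open Filter Topology Metric

noncomputable section

/-! ### The ellipse -/

/-- The point `(x, y)` of the Euclidean plane. -/
def pt2 (x y : ℝ) : EuclideanSpace ℝ (Fin 2) := (WithLp.equiv 2 (Fin 2 → ℝ)).symm ![x, y]

/-- The ellipse `{(x,y) : (x/a)² + y² = 1}` in the Euclidean plane. -/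
def ellipse (a : ℝ) : Set (EuclideanSpace ℝ (Fin 2)) :=
  {p | (p 0 / a) ^ 2 + (p 1) ^ 2 = 1}

/-- `r₁ = 4√3·a/(a²+3)`. -/
def ellipseR1 (a : ℝ) : ℝ := 4 * Real.sqrt 3 * a / (a ^ 2 + 3)

/-- `r₂ = 4√3·a²/(3a²+1)`. -/
def ellipseR2 (a : ℝ) : ℝ := 4 * Real.sqrt 3 * a ^ 2 / (3 * a ^ 2 + 1)

/-- A direction vector of the line normal to the ellipse `(x/a)² + y² = 1` at the
point `p` (proportional to the gradient `(2x/a², 2y)` at `p`). -/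
def normalDir (a : ℝ) (p : EuclideanSpace ℝ (Fin 2)) : EuclideanSpace ℝ (Fin 2) :=
  pt2 (p 0 / a ^ 2) (p 1)

/-! ### Auxiliary lemmas -/

lemma EllipseAux.pt2_zero (x y : ℝ) : pt2 x y 0 = x := rfl

lemma EllipseAux.pt2_one (x y : ℝ) : pt2 x y 1 = y := rfl

lemma EllipseAux.ext2 {p q : EuclideanSpace ℝ (Fin 2)} (h0 : p 0 = q 0) (h1 : p 1 = q 1) :
    p = q := by
  ext i; fin_cases i <;> assumption

lemma EllipseAux.sq_from_mem {a : ℝ} (ha : a ≠ 0) {p : EuclideanSpace ℝ (Fin 2)}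
    (hp : p ∈ ellipse a) : (p 0)^2 = a^2 * (1 - (p 1)^2) := by
  have h : (p 0 / a) ^ 2 + (p 1) ^ 2 = 1 := hp
  field_simp at h
  linarith

lemma EllipseAux.y_sq_le_one {a : ℝ} (ha : 1 < a) {p : EuclideanSpace ℝ (Fin 2)}
    (hp : p ∈ ellipse a) : (p 1)^2 ≤ 1 := by
  have ha0 : a ≠ 0 := by nlinarith
  have h := EllipseAux.sq_from_mem ha0 hp
  have haa : 1 ≤ a^2 := by nlinarith
  nlinarith [sq_nonneg (p 0)]

/-- Coordinates of the second intersection of the normal line with the ellipse. -/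
lemma EllipseAux.key_coords (a : ℝ) (ha : 1 < a) (p q : EuclideanSpace ℝ (Fin 2))
    (hp : p ∈ ellipse a) (hq : q ∈ ellipse a) (hne : q ≠ p) (t : ℝ)
    (ht : q = p + t • normalDir a p) :
    q 0 * (1 - (p 1)^2 + a^4 * (p 1)^2)
      = p 0 * (a^2*(a^2-2)*(p 1)^2 - (1 - (p 1)^2)) ∧
    q 1 * (1 - (p 1)^2 + a^4 * (p 1)^2)
      = p 1 * ((1-2*a^2)*(1-(p 1)^2) - a^4*(p 1)^2) := by
  have ha0 : a ≠ 0 := by nlinarith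
  have ha2 : (a:ℝ)^2 ≠ 0 := pow_ne_zero 2 ha0
  set x := p 0 with hxdef
  set y := p 1 with hydef
  have hq0 : q 0 = x + t * (x / a^2) := by rw [ht]; rfl
  have hq1 : q 1 = y + t * y := by rw [ht]; rfl
  have hx : x^2 = a^2 * (1 - y^2) := EllipseAux.sq_from_mem ha0 hp
  have ht0 : t ≠ 0 := by
    rintro rfl
    apply hne
    rw [ht]
    ext i; fin_cases i <;> simp [normalDir, pt2]
  have hq0' : a^2 * q 0 = a^2 * x + t * x := by rw [hq0]; field_simp
  have hQ : (q 0)^2 = a^2 * (1 - (q 1)^2) := EllipseAux.sq_from_mem ha0 hq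
  have hq'' : (a^2 * x + t*x)^2 = a^6 * (1 - (y + t*y)^2) := by
    have h2 : (a^2 * q 0)^2 = a^4 * (q 0)^2 := by ring
    rw [hq0'] at h2
    rw [hQ, hq1] at h2
    linear_combination h2
  have hmain2 : a^2 * (t * ((1-y^2)*(2*a^2+t) + a^4*y^2*(2+t))) = 0 := by
    linear_combination hq'' - (a^2+t)^2 * hx
  have hinner : (1-y^2)*(2*a^2+t) + a^4*y^2*(2+t) = 0 := by
    rcases mul_eq_zero.mp hmain2 with h | h
    · exact absurd h ha2
    · rcases mul_eq_zero.mp h with h' | h'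
      · exact absurd h' ht0
      · exact h'
  have htD : t * (1 - y^2 + a^4*y^2) = -(2*a^2) * (1 - y^2 + a^2*y^2) := by
    linear_combination hinner
  constructor
  · have : a^2 * (q 0 * (1 - y^2 + a^4*y^2))
        = a^2 * (x * (a^2*(a^2-2)*y^2 - (1 - y^2))) := by
      linear_combination (1 - y^2 + a^4*y^2) * hq0' + x * htD
    exact mul_left_cancel₀ ha2 this
  · linear_combination (1 - y^2 + a^4*y^2) * hq1 + y * htD

/-- Algebraic core of injectivity: equal second coordinates of images force equal
second coordinates, when `a² ≤ 2`. -/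
lemma EllipseAux.inj_core (a u v W : ℝ) (ha : 1 < a) (ha2 : a^2 ≤ 2) (hu2 : u^2 ≤ 1)
    (hv2 : v^2 ≤ 1)
    (h1 : W * (1 - u^2 + a^4*u^2) = u * ((1-2*a^2)*(1-u^2) - a^4*u^2))
    (h2 : W * (1 - v^2 + a^4*v^2) = v * ((1-2*a^2)*(1-v^2) - a^4*v^2)) : u = v := by
  have huv : u*v ≤ 1 := by nlinarith [sq_nonneg (u-v)]
  have cross : (u * ((1-2*a^2)*(1-u^2) - a^4*u^2)) * (1 - v^2 + a^4*v^2)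
      = (v * ((1-2*a^2)*(1-v^2) - a^4*v^2)) * (1 - u^2 + a^4*u^2) := by
    linear_combination (1 - u^2 + a^4*u^2) * h2 - (1 - v^2 + a^4*v^2) * h1
  have hfac : (u - v) * ((2*a^2-1) + (a^2-1)^2*(u^2+u*v+v^2)
      - (2*a^2-1)*(a^4-1)*(u*v) + (a^2-1)^2*(a^4-1)*(u*v)^2) = 0 := by
    linear_combination -cross
  rcases mul_eq_zero.mp hfac with h' | h'
  · linarith [sub_eq_zero.mp h']
  · have he1 : (0:ℝ) < a^2 - 1 := by nlinarith
    have he2 : a^2 - 1 ≤ 1 := by nlinarith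
    have t3 : (0:ℝ) ≤ (a^2-1)^3*(a^2+1)*(1-u*v)^2 := by positivity
    have t4 : (0:ℝ) ≤ 2*(a^2-1)*a^4*(2-a^2)*(1-u*v) := by
      apply mul_nonneg _ (by linarith)
      apply mul_nonneg _ (by linarith)
      positivity
    have hid : (2*a^2-1) + (a^2-1)^2*(u^2+u*v+v^2) - (2*a^2-1)*(a^4-1)*(u*v)
        + (a^2-1)^2*(a^4-1)*(u*v)^2
        = (a^2-1)^2*(u-v)^2 + ((2-a^2)*a^2)^2 + (a^2-1)^3*(a^2+1)*(1-u*v)^2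
        + 2*(a^2-1)*a^4*(2-a^2)*(1-u*v) := by ring
    rw [hid] at h'
    have t2 : (0:ℝ) ≤ ((2-a^2)*a^2)^2 := sq_nonneg _
    have t1 : (a^2-1)^2*(u-v)^2 ≤ 0 := by linarith
    have huv0 : (u-v)^2 ≤ 0 := by
      have hpos : (0:ℝ) < (a^2-1)^2 := by positivity
      nlinarith [sq_nonneg (u-v)]
    have : (u-v)^2 = 0 := le_antisymm huv0 (sq_nonneg _)
    have := pow_eq_zero_iff (n := 2) (by norm_num) |>.mp this
    linarith [sub_eq_zero.mp this]

/-- Algebraic core of injectivity, first coordinates. -/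
lemma EllipseAux.inj_core0 (a u xP xQ X : ℝ) (ha : 1 < a) (ha2 : a^2 ≤ 2) (hu2 : u^2 ≤ 1)
    (hxP : xP^2 = a^2*(1-u^2)) (hxQ : xQ^2 = a^2*(1-u^2))
    (h1 : X = xP * (a^2*(a^2-2)*u^2 - (1 - u^2)))
    (h2 : X = xQ * (a^2*(a^2-2)*u^2 - (1 - u^2))) : xP = xQ := by
  rcases lt_or_eq_of_le hu2 with hlt | heq1
  · have hA : a^2*(a^2-2)*u^2 - (1 - u^2) < 0 := by
      nlinarith [mul_nonneg (mul_nonneg (by positivity : (0:ℝ) ≤ a^2)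
        (sub_nonneg.mpr ha2)) (sq_nonneg u)]
    exact mul_right_cancel₀ (ne_of_lt hA) (h1.symm.trans h2)
  · have hp0 : xP^2 = 0 := by rw [hxP, ← heq1]; ring
    have hq0 : xQ^2 = 0 := by rw [hxQ, ← heq1]; ring
    rw [pow_eq_zero_iff (by norm_num : 2 ≠ 0)] at hp0 hq0
    rw [hp0, hq0]

lemma EllipseAux.same_sign_sq {p q : ℝ} (h1 : p^2 = q^2) (h2 : 0 ≤ p*q) : p = q := by
  have : (p - q) * (p + q) = 0 := by linear_combination h1
  rcases mul_eq_zero.mp this with h' | h'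
  · linarith [sub_eq_zero.mp h']
  · have hpq : p = -q := by linarith
    have hq0 : q = 0 := by nlinarith
    rw [hpq, hq0]; ring

/-- **Bijectivity of the normal map characterizes small eccentricity**
(Adamaszek–Adams–Reddy, Lemma 6.4). Let `Y` be an ellipse with `a > 1` and let
`h : Y → Y` send each point `p` to the unique other intersection of the normal line of
`Y` at `p` with `Y`. Then `h` is bijective if and only if `a ≤ √2`. -/
theorem ellipse_normal_map_bijective_iff (a : ℝ) (ha : 1 < a)
    (h : ↥(ellipse a) → ↥(ellipse a))
    (hh : ∀ p : ↥(ellipse a), h p ≠ p ∧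
      ∃ t : ℝ, ((h p : EuclideanSpace ℝ (Fin 2))) = ↑p + t • normalDir a ↑p) :
    Function.Bijective h ↔ a ≤ Real.sqrt 2 := by
  have ha0 : a ≠ 0 := by nlinarith
  rw [Real.le_sqrt (by linarith) (by norm_num)]
  constructor
  · -- bijective → a² ≤ 2: contrapositive, exhibit an injectivity failure
    intro hbij
    by_contra hgt
    push_neg at hgt
    have hinj := hbij.injective
    set y₀ : ℝ := 1/(a^2-1) with hy₀
    have hden : (1:ℝ) < a^2 - 1 := by nlinarith
    have hy₀pos : 0 < y₀ := by positivity
    have hy₀lt : y₀ < 1 := by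
      rw [hy₀, div_lt_one (by linarith)]; linarith
    have hy₀sq : 1 - y₀^2 > 0 := by nlinarith
    set x₀ : ℝ := a * Real.sqrt (1 - y₀^2) with hx₀
    have hx₀pos : 0 < x₀ :=
      mul_pos (by linarith) (Real.sqrt_pos.mpr hy₀sq)
    have hmem : ∀ x : ℝ, x^2 = a^2 * (1 - y₀^2) → pt2 x y₀ ∈ ellipse a := by
      intro x hx
      show (x / a)^2 + y₀^2 = 1
      rw [div_pow, hx]
      field_simp
      ring
    have hx₀sq : x₀^2 = a^2 * (1 - y₀^2) := by
      rw [hx₀, mul_pow, Real.sq_sqrt (le_of_lt hy₀sq)]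
    have hmem1 : pt2 x₀ y₀ ∈ ellipse a := hmem x₀ hx₀sq
    have hmem2 : pt2 (-x₀) y₀ ∈ ellipse a := hmem (-x₀) (by rw [neg_pow]; simpa using hx₀sq)
    set P₁ : ↥(ellipse a) := ⟨pt2 x₀ y₀, hmem1⟩
    set P₂ : ↥(ellipse a) := ⟨pt2 (-x₀) y₀, hmem2⟩
    have hA : a^2*(a^2-2)*y₀^2 - (1 - y₀^2) = 0 := by
      rw [hy₀]; field_simp; ring
    have hD : (0:ℝ) < 1 - y₀^2 + a^4 * y₀^2 := by nlinarith
    have key : ∀ (P : ↥(ellipse a)), (P : EuclideanSpace ℝ (Fin 2)) 1 = y₀ →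
        ((h P : EuclideanSpace ℝ (Fin 2)) 0 = 0 ∧
         (h P : EuclideanSpace ℝ (Fin 2)) 1 * (1 - y₀^2 + a^4 * y₀^2)
           = y₀ * ((1-2*a^2)*(1-y₀^2) - a^4*y₀^2)) := by
      intro P hP1
      obtain ⟨hne, t, ht⟩ := hh P
      have hne' : (h P : EuclideanSpace ℝ (Fin 2)) ≠ (P : EuclideanSpace ℝ (Fin 2)) :=
        fun he => hne (Subtype.ext he)
      have := EllipseAux.key_coords a ha (P : EuclideanSpace ℝ (Fin 2)) (h P) P.2 (h P).2
        hne' t ht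
      rw [hP1] at this
      obtain ⟨h0, h1⟩ := this
      rw [hA, mul_zero] at h0
      refine ⟨?_, h1⟩
      rcases mul_eq_zero.mp h0 with h' | h'
      · exact h'
      · exact absurd h' (ne_of_gt hD)
    have k1 := key P₁ rfl
    have k2 := key P₂ rfl
    have heq : h P₁ = h P₂ := by
      apply Subtype.ext
      apply EllipseAux.ext2
      · rw [k1.1, k2.1]
      · exact mul_right_cancel₀ (ne_of_gt hD) (k1.2.trans k2.2.symm)
    have := hinj heq
    rw [Subtype.ext_iff] at this
    have h0 : x₀ = -x₀ := congrArg (fun v : EuclideanSpace ℝ (Fin 2) => v 0) this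
    linarith
  · -- a² ≤ 2 → bijective
    intro ha2
    constructor
    · -- injective
      intro P Q hPQ
      obtain ⟨hneP, tP, htP⟩ := hh P
      obtain ⟨hneQ, tQ, htQ⟩ := hh Q
      have hneP' : (h P : EuclideanSpace ℝ (Fin 2)) ≠ (P : EuclideanSpace ℝ (Fin 2)) :=
        fun he => hneP (Subtype.ext he)
      have hneQ' : (h Q : EuclideanSpace ℝ (Fin 2)) ≠ (Q : EuclideanSpace ℝ (Fin 2)) :=
        fun he => hneQ (Subtype.ext he)
      obtain ⟨C0P, C1P⟩ := EllipseAux.key_coords a ha _ _ P.2 (h P).2 hneP' tP htP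
      obtain ⟨C0Q, C1Q⟩ := EllipseAux.key_coords a ha _ _ Q.2 (h Q).2 hneQ' tQ htQ
      have hw : (h P : EuclideanSpace ℝ (Fin 2)) = (h Q : EuclideanSpace ℝ (Fin 2)) := by
        rw [hPQ]
      rw [hw] at C1P C0P
      have hu2 : ((P : EuclideanSpace ℝ (Fin 2)) 1)^2 ≤ 1 := EllipseAux.y_sq_le_one ha P.2
      have hv2 : ((Q : EuclideanSpace ℝ (Fin 2)) 1)^2 ≤ 1 := EllipseAux.y_sq_le_one ha Q.2
      have huv : (P : EuclideanSpace ℝ (Fin 2)) 1 = (Q : EuclideanSpace ℝ (Fin 2)) 1 :=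
        EllipseAux.inj_core a _ _ ((h Q : EuclideanSpace ℝ (Fin 2)) 1) ha ha2 hu2 hv2 C1P C1Q
      rw [← huv] at C0Q
      have hxP : ((P : EuclideanSpace ℝ (Fin 2)) 0)^2
          = a^2*(1 - ((P : EuclideanSpace ℝ (Fin 2)) 1)^2) := EllipseAux.sq_from_mem ha0 P.2
      have hxQ : ((Q : EuclideanSpace ℝ (Fin 2)) 0)^2
          = a^2*(1 - ((P : EuclideanSpace ℝ (Fin 2)) 1)^2) := by
        rw [EllipseAux.sq_from_mem ha0 Q.2, ← huv]
      exact Subtype.ext (EllipseAux.ext2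
        (EllipseAux.inj_core0 a _ _ _ _ ha ha2 hu2 hxP hxQ C0P C0Q) huv)
    · -- surjective
      intro Q
      set Y : ℝ := (Q : EuclideanSpace ℝ (Fin 2)) 1 with hYdef
      have hY2 : Y^2 ≤ 1 := EllipseAux.y_sq_le_one ha Q.2
      have hYl : -1 ≤ Y := by nlinarith [sq_nonneg (Y+1)]
      have hYr : Y ≤ 1 := by nlinarith [sq_nonneg (Y-1)]
      have ha4 : (1:ℝ) < a^4 := by nlinarith [sq_nonneg (a^2-1), sq_nonneg (a-1), sq_nonneg a]
      have hDpos : ∀ y : ℝ, (0:ℝ) < 1 - y^2 + a^4*y^2 := by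
        intro y
        nlinarith [mul_nonneg (sub_nonneg.mpr ha4.le) (sq_nonneg y)]
      -- intermediate value theorem for the second coordinate
      set g : ℝ → ℝ := fun y => y * ((1-2*a^2)*(1-y^2) - a^4*y^2) / (1 - y^2 + a^4*y^2)
        with hg
      have hcont : Continuous g := by
        apply Continuous.div (by fun_prop) (by fun_prop)
        intro y; exact ne_of_gt (hDpos y)
      have hgm1 : g (-1) = 1 := by
        rw [hg]; simp only
        rw [div_eq_iff (ne_of_gt (hDpos (-1)))]; ring
      have hg1 : g 1 = -1 := by
        rw [hg]; simp only
        rw [div_eq_iff (ne_of_gt (hDpos 1))]; ring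
      have hsub : Set.Icc (g 1) (g (-1)) ⊆ g '' Set.Icc (-1) 1 :=
        intermediate_value_Icc' (by norm_num) hcont.continuousOn
      have hmemY : Y ∈ Set.Icc (g 1) (g (-1)) := by
        rw [hg1, hgm1]; exact ⟨hYl, hYr⟩
      obtain ⟨y, hy, hgy⟩ := hsub hmemY
      have hy2 : y^2 ≤ 1 := by
        obtain ⟨hy1, hy2⟩ := hy
        nlinarith
      have hyN : y * ((1-2*a^2)*(1-y^2) - a^4*y^2) = Y * (1 - y^2 + a^4*y^2) := by
        rw [← hgy, hg]; simp only
        rw [div_mul_cancel₀ _ (ne_of_gt (hDpos y))]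
      -- choose the first coordinate with a sign opposite to that of `Q 0`
      obtain ⟨x, hxsq, hxsign⟩ : ∃ x : ℝ, x^2 = a^2 * (1 - y^2)
          ∧ x * (Q : EuclideanSpace ℝ (Fin 2)) 0 ≤ 0 := by
        rcases le_or_gt 0 ((Q : EuclideanSpace ℝ (Fin 2)) 0) with hX | hX
        · refine ⟨-(a * Real.sqrt (1 - y^2)), ?_, ?_⟩
          · rw [neg_pow, mul_pow, Real.sq_sqrt (by linarith)]; ring
          · apply mul_nonpos_of_nonpos_of_nonneg _ hX
            simp only [neg_nonpos]
            positivity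
        · refine ⟨a * Real.sqrt (1 - y^2), ?_, ?_⟩
          · rw [mul_pow, Real.sq_sqrt (by linarith)]
          · apply mul_nonpos_of_nonneg_of_nonpos _ (le_of_lt hX)
            positivity
      have hmemp : pt2 x y ∈ ellipse a := by
        show (x / a)^2 + y^2 = 1
        rw [div_pow, hxsq]
        field_simp
        ring
      set P : ↥(ellipse a) := ⟨pt2 x y, hmemp⟩ with hPdef
      refine ⟨P, ?_⟩
      obtain ⟨hne, t, ht⟩ := hh P
      have hne' : (h P : EuclideanSpace ℝ (Fin 2)) ≠ (P : EuclideanSpace ℝ (Fin 2)) :=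
        fun he => hne (Subtype.ext he)
      have hC := EllipseAux.key_coords a ha (P : EuclideanSpace ℝ (Fin 2)) (h P) P.2 (h P).2
        hne' t ht
      have hP0 : (P : EuclideanSpace ℝ (Fin 2)) 0 = x := rfl
      have hP1 : (P : EuclideanSpace ℝ (Fin 2)) 1 = y := rfl
      rw [hP0, hP1] at hC
      obtain ⟨C0, C1⟩ := hC
      -- second coordinate of `h P` is `Y`
      have hco1 : (h P : EuclideanSpace ℝ (Fin 2)) 1 = Y := by
        have : (h P : EuclideanSpace ℝ (Fin 2)) 1 * (1 - y^2 + a^4*y^2)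
            = Y * (1 - y^2 + a^4*y^2) := by rw [C1, hyN]
        exact mul_right_cancel₀ (ne_of_gt (hDpos y)) this
      -- first coordinate: same square, same sign
      have hsq : ((h P : EuclideanSpace ℝ (Fin 2)) 0)^2
          = ((Q : EuclideanSpace ℝ (Fin 2)) 0)^2 := by
        rw [EllipseAux.sq_from_mem ha0 (h P).2, EllipseAux.sq_from_mem ha0 Q.2, hco1, hYdef]
      have hApos : a^2*(a^2-2)*y^2 - (1 - y^2) ≤ 0 := by
        nlinarith [mul_nonneg (mul_nonneg (by positivity : (0:ℝ) ≤ a^2)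
          (sub_nonneg.mpr ha2)) (sq_nonneg y)]
      have hsign : 0 ≤ (h P : EuclideanSpace ℝ (Fin 2)) 0 * (Q : EuclideanSpace ℝ (Fin 2)) 0 := by
        have hstep : 0 ≤ ((h P : EuclideanSpace ℝ (Fin 2)) 0
            * (Q : EuclideanSpace ℝ (Fin 2)) 0) * (1 - y^2 + a^4*y^2) := by
          have : ((h P : EuclideanSpace ℝ (Fin 2)) 0 * (Q : EuclideanSpace ℝ (Fin 2)) 0)
              * (1 - y^2 + a^4*y^2)
              = (a^2*(a^2-2)*y^2 - (1 - y^2)) * (x * (Q : EuclideanSpace ℝ (Fin 2)) 0) := by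
            linear_combination (Q : EuclideanSpace ℝ (Fin 2)) 0 * C0
          rw [this]
          have := mul_nonneg (neg_nonneg.mpr hApos) (neg_nonneg.mpr hxsign)
          rw [neg_mul_neg] at this
          exact this
        by_contra hc
        push_neg at hc
        exact absurd hstep (not_le.mpr (mul_neg_of_neg_of_pos hc (hDpos y)))
      have hco0 : (h P : EuclideanSpace ℝ (Fin 2)) 0 = (Q : EuclideanSpace ℝ (Fin 2)) 0 :=
        EllipseAux.same_sign_sq hsq hsign
      exact Subtype.ext (EllipseAux.ext2 hco0 hco1)

end
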